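/- Let f be a Boolean network of dimension n, y a state, and I ⊆ Fin n a set of vertices containing every vertex that lies on some positive cycle of the interaction graph G(f). Then the interaction graph G(f[I←y]) of the modified network f[I←y] contains no positive cycle. -/

import Mathlib

/-- Asynchronous transition: update one vertex `u` where `f` disagrees with `x`. -/
def AsyncStep {n : ℕ} (f : (Fin n → Bool) → (Fin n → Bool)) (x z : Fin n → Bool) : Prop :=
  ∃ u : Fin n, f x u ≠ x u ∧ z = Function.update x u (f x u)

/-- Reachability: reflexive-transitive closure of the asynchronous transition relation. -/
def Reach {n : ℕ} (f : (Fin n → Bool) → (Fin n → Bool)) :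
    (Fin n → Bool) → (Fin n → Bool) → Prop :=
  Relation.ReflTransGen (AsyncStep f)

/-- An attractor: nonempty, closed under transitions, strongly connected for reachability. -/
def IsAttractor {n : ℕ} (f : (Fin n → Bool) → (Fin n → Bool)) (S : Set (Fin n → Bool)) : Prop :=
  S.Nonempty ∧ (∀ x ∈ S, ∀ z, AsyncStep f x z → z ∈ S) ∧ (∀ x ∈ S, ∀ z ∈ S, Reach f x z)

/-- Positive edge of the interaction graph `G(f)`. -/
def PosEdge {n : ℕ} (f : (Fin n → Bool) → (Fin n → Bool)) (u v : Fin n) : Prop :=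
  ∃ x : Fin n → Bool,
    f (Function.update x u true) v = true ∧ f (Function.update x u false) v = false

/-- Negative edge of the interaction graph `G(f)`. -/
def NegEdge {n : ℕ} (f : (Fin n → Bool) → (Fin n → Bool)) (u v : Fin n) : Prop :=
  ∃ x : Fin n → Bool,
    f (Function.update x u true) v = false ∧ f (Function.update x u false) v = true

/-- Signed edge (`true` = positive, `false` = negative). -/
def SignedEdge {n : ℕ} (f : (Fin n → Bool) → (Fin n → Bool)) (u v : Fin n) (s : Bool) : Prop :=
  match s with
  | true => PosEdge f u v
  | false => NegEdge f u v

/-- A cycle of `G(f)`: a nonempty list of signed edges, consecutively chained,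
the last edge returning to the source of the first. -/
def IsCycle {n : ℕ} (f : (Fin n → Bool) → (Fin n → Bool))
    (es : List (Fin n × Fin n × Bool)) : Prop :=
  es ≠ [] ∧ (∀ e ∈ es, SignedEdge f e.1 e.2.1 e.2.2) ∧
  es.Chain' (fun e e' => e.2.1 = e'.1) ∧
  es.getLast?.map (fun e => e.2.1) = es.head?.map (fun e => e.1)

/-- A positive cycle: a cycle traversing an even number of negative edges. -/
def IsPosCycle {n : ℕ} (f : (Fin n → Bool) → (Fin n → Bool))
    (es : List (Fin n × Fin n × Bool)) : Prop :=
  IsCycle f es ∧ Even (es.countP (fun e => !e.2.2))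

/-- Unsigned edge of the interaction graph. -/
def EdgeU {n : ℕ} (f : (Fin n → Bool) → (Fin n → Bool)) (u v : Fin n) : Prop :=
  PosEdge f u v ∨ NegEdge f u v

/-- `v` is an ancestor of `u`: nonempty directed path from `v` to `u` in `G(f)`. -/
def Ancestor {n : ℕ} (f : (Fin n → Bool) → (Fin n → Bool)) (v u : Fin n) : Prop :=
  Relation.TransGen (EdgeU f) v u

/-- `u` and `v` are in the same strongly connected component of (the unsigned) `G(f)`. -/
def SameSCC {n : ℕ} (f : (Fin n → Bool) → (Fin n → Bool)) (u v : Fin n) : Prop :=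
  Relation.ReflTransGen (EdgeU f) u v ∧ Relation.ReflTransGen (EdgeU f) v u

/-- `u` belongs to an SCC of `G(f)` containing a positive cycle. -/
def InPosSCC {n : ℕ} (f : (Fin n → Bool) → (Fin n → Bool)) (u : Fin n) : Prop :=
  ∃ es, IsPosCycle f es ∧ ∀ v ∈ es.map Prod.fst, SameSCC f v u

open Classical in
/-- The modified network `f[I←y]`. -/
noncomputable def modifyBN {n : ℕ} (f : (Fin n → Bool) → (Fin n → Bool)) (I : Set (Fin n))
    (y : Fin n → Bool) : (Fin n → Bool) → (Fin n → Bool) :=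
  fun x i => if i ∈ I then y i else f x i

open Classical in
/-- The state `x_{[x_I = y_I]}`: equal to `y` on `I`, to `x` elsewhere. -/
noncomputable def patchState {n : ℕ} (x : Fin n → Bool) (I : Set (Fin n)) (y : Fin n → Bool) :
    Fin n → Bool :=
  fun i => if i ∈ I then y i else x i

/-- if `I` contains every vertex lying on some positive cycle of `G(f)`,
then `G(f[I←y])` has no positive cycle. -/
theorem stmt7 {n : ℕ} (f : (Fin n → Bool) → (Fin n → Bool)) (y : Fin n → Bool)
    (I : Set (Fin n))
    (hI : ∀ (u : Fin n) es, IsPosCycle f es → u ∈ es.map Prod.fst → u ∈ I) :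
    ¬ ∃ es, IsPosCycle (modifyBN f I y) es := by
  rintro ⟨es, ⟨hne, hedges, hchain, hcyc⟩, heven⟩
  -- targets of edges of the modified graph are not in I
  have htgt : ∀ e ∈ es, e.2.1 ∉ I := by
    intro e he hmem
    have hs := hedges e he
    cases hb : e.2.2 <;> rw [hb] at hs
    · obtain ⟨x, h1, h2⟩ := hs
      simp only [modifyBN, if_pos hmem] at h1 h2
      exact absurd (h1.symm.trans h2) (by simp)
    · obtain ⟨x, h1, h2⟩ := hs
      simp only [modifyBN, if_pos hmem] at h1 h2
      exact absurd (h1.symm.trans h2) (by simp)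
  -- such edges are edges of G(f) with the same sign
  have hedges' : ∀ e ∈ es, SignedEdge f e.1 e.2.1 e.2.2 := by
    intro e he
    have hni := htgt e he
    have hs := hedges e he
    cases hb : e.2.2 <;> rw [hb] at hs
    · obtain ⟨x, h1, h2⟩ := hs
      simp only [modifyBN, if_neg hni] at h1 h2
      exact ⟨x, h1, h2⟩
    · obtain ⟨x, h1, h2⟩ := hs
      simp only [modifyBN, if_neg hni] at h1 h2
      exact ⟨x, h1, h2⟩
  have hpc : IsPosCycle f es := ⟨⟨hne, hedges', hchain, hcyc⟩, heven⟩
  have hhead : es.head? = some (es.head hne) := List.head?_eq_head hne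
  have hlast : es.getLast? = some (es.getLast hne) := List.getLast?_eq_getLast hne
  rw [hhead, hlast] at hcyc
  simp only [Option.map_some, Option.some.injEq] at hcyc
  have humem : (es.head hne).1 ∈ es.map Prod.fst :=
    List.mem_map_of_mem (f := Prod.fst) (List.head_mem hne)
  have huI : (es.head hne).1 ∈ I := hI _ es hpc humem
  have hnot : (es.getLast hne).2.1 ∉ I := htgt _ (List.getLast_mem hne)
  rw [hcyc] at hnot
  exact hnot huI
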